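/- Let {u_t}_{t≥0} be a sequence of nonnegative reals. If ∑_{t=0}^∞ max(u_{t+1} - u_t, 0) < ∞, then the sequence u_t converges to a finite limit, and ∑_{t=0}^∞ min(u_{t+1} - u_t, 0) > -∞. -/

import Mathlib

theorem stmt_13 (u : ℕ → ℝ) (hu : ∀ t, 0 ≤ u t)
    (hsum : Summable (fun t => max (u (t + 1) - u t) 0)) :
    (∃ L : ℝ, Filter.Tendsto u Filter.atTop (nhds L)) ∧
      Summable (fun t => min (u (t + 1) - u t) 0) := by
  set d : ℕ → ℝ := fun t => u (t + 1) - u t with hd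
  have hsplit : ∀ t, max (d t) 0 + min (d t) 0 = d t := fun t => by simp [max_add_min (d t) 0]
  -- partial sums of d telescope
  have htel : ∀ N, ∑ t ∈ Finset.range N, d t = u N - u 0 := fun N =>
    Finset.sum_range_sub u N
  have hple : ∀ N, ∑ t ∈ Finset.range N, max (d t) 0 ≤ ∑' t, max (d t) 0 := fun N =>
    Summable.sum_le_tsum _ (fun i _ => le_max_right _ _) hsum
  have hnneg : Summable (fun t => -(min (d t) 0)) := by
    apply summable_of_sum_range_le (c := (∑' t, max (d t) 0) + u 0)
    · intro t; simp [min_le_iff]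
    · intro N
      have : ∑ t ∈ Finset.range N, -(min (d t) 0)
          = ∑ t ∈ Finset.range N, max (d t) 0 - (u N - u 0) := by
        rw [← htel N]
        rw [← Finset.sum_sub_distrib]
        congr 1; funext t
        linarith [hsplit t]
      rw [this]
      have := hple N
      have := hu N
      linarith
  have hminsum : Summable (fun t => min (d t) 0) := by
    have := hnneg.neg
    simpa using this
  refine ⟨?_, hminsum⟩
  have hdsum : Summable d := by
    have := (show Summable (fun t => max (d t) 0) from hsum).add hminsum
    simpa [hsplit] using this
  refine ⟨u 0 + ∑' t, d t, ?_⟩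
  have h1 : Filter.Tendsto (fun N => ∑ t ∈ Finset.range N, d t) Filter.atTop
      (nhds (∑' t, d t)) := hdsum.hasSum.tendsto_sum_nat
  have h2 : Filter.Tendsto (fun N => u 0 + ∑ t ∈ Finset.range N, d t) Filter.atTop
      (nhds (u 0 + ∑' t, d t)) := h1.const_add _
  convert h2 using 2 with N
  rw [htel N]; ring
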